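/- Let χ : ℤ × ℤ → ℂˣ be a group homomorphism which is not trivial (χ(g) ≠ 1 for some g), and let ℂ_χ denote the one-dimensional complex representation of the group ℤ × ℤ in which g acts by multiplication by χ(g). Then the group homology H_m(ℤ × ℤ; ℂ_χ) vanishes for every m ≥ 0. -/

import Mathlib

open CategoryTheory

/-- The one-dimensional representation of `ℤ × ℤ` on `ℂ` in which `g` acts by
multiplication by `χ g`. -/
noncomputable def charRep (χ : Multiplicative (ℤ × ℤ) →* ℂˣ) :
    Representation ℂ (Multiplicative (ℤ × ℤ)) ℂ where
  toFun g := (χ g : ℂ) • LinearMap.id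
  map_one' := by simp [Module.End.one_eq_id]
  map_mul' g h := by
    ext
    simp [Module.End.mul_apply, mul_smul, mul_comm]

namespace CharRepAux

open CategoryTheory.Limits MonoidalCategory HomologicalComplex

universe u

variable {R : Type u} [CommRing R]

/-- `single₀` commutes with scalar multiplication of morphisms. -/
lemma single₀_map_smul {C : Type*} [Category C] [Preadditive C] [Linear R C]
    [Limits.HasZeroObject C] {A B : C} (a : R) (f : A ⟶ B) :
    (ChainComplex.single₀ C).map (a • f) = a • (ChainComplex.single₀ C).map f := by
  apply HomologicalComplex.from_single_hom_ext
  rw [ChainComplex.single₀_map_f_zero, HomologicalComplex.smul_f_apply,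
    ChainComplex.single₀_map_f_zero]
  rfl

/-- The key abstract lemma: if `r` acts as zero on `X` and as the unit `c` on `Y`,
then `Tor_m(X, Y) = 0`. -/
lemma isZero_Tor (X Y : ModuleCat.{u} R) (r c : R) (hc : IsUnit c)
    (hX : (r • 𝟙 X : X ⟶ X) = 0) (hY : (r • 𝟙 Y : Y ⟶ Y) = c • 𝟙 Y) (m : ℕ) :
    IsZero (((Tor (ModuleCat.{u} R) m).obj X).obj Y) := by
  let F : ModuleCat.{u} R ⥤ ModuleCat.{u} R := (tensoringLeft (ModuleCat.{u} R)).obj X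
  let P : ProjectiveResolution Y := (HasProjectiveResolution.out (Z := Y)).some
  let Φ : ChainComplex (ModuleCat.{u} R) ℕ ⥤ ChainComplex (ModuleCat.{u} R) ℕ :=
    F.mapHomologicalComplex (ComplexShape.down ℕ)
  -- the two chain maps are homotopic
  have g_comm : (r • 𝟙 P.complex) ≫ P.π = P.π ≫ (ChainComplex.single₀ _).map (r • 𝟙 Y) := by
    erw [single₀_map_smul (R := R), CategoryTheory.Functor.map_id, Linear.smul_comp, Linear.comp_smul,
      Category.id_comp]
  have h_comm : (c • 𝟙 P.complex) ≫ P.π = P.π ≫ (ChainComplex.single₀ _).map (r • 𝟙 Y) := by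
    erw [hY, single₀_map_smul (R := R), CategoryTheory.Functor.map_id, Linear.smul_comp, Linear.comp_smul,
      Category.id_comp]
  have ho : Homotopy (r • 𝟙 P.complex) (c • 𝟙 P.complex) :=
    ProjectiveResolution.liftHomotopy (r • 𝟙 Y) _ _ g_comm h_comm
  -- F kills the first chain map
  have hcomp : ∀ M : ModuleCat.{u} R, F.map (r • 𝟙 M) = 0 := by
    intro M
    apply ModuleCat.hom_ext
    apply TensorProduct.ext'
    intro x y
    have hx : r • x = (0 : X) := congrFun (congrArg (fun (f : X ⟶ X) => (f : X → X)) hX) x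
    show (F.map (r • 𝟙 M)) (x ⊗ₜ[R] y) = 0
    erw [ModuleCat.MonoidalCategory.whiskerLeft_apply]
    change x ⊗ₜ[R] ((r • 𝟙 M).hom y) = 0
    show x ⊗ₜ[R] (r • (𝟙 M) y) = 0
    rw [TensorProduct.tmul_smul, TensorProduct.smul_tmul', hx, TensorProduct.zero_tmul]
  have hzero : Φ.map (r • 𝟙 P.complex) = 0 := by
    apply HomologicalComplex.hom_ext
    intro n
    rw [Functor.mapHomologicalComplex_map_f, HomologicalComplex.smul_f_apply,
      HomologicalComplex.id_f, hcomp, HomologicalComplex.zero_f]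
    rfl
  -- the second chain map is an isomorphism
  obtain ⟨u, rfl⟩ := hc
  have hiso : IsIso ((u : R) • 𝟙 P.complex) := by
    refine ⟨((u⁻¹ : Rˣ) : R) • 𝟙 P.complex, ?_, ?_⟩ <;>
      rw [Linear.smul_comp, Linear.comp_smul, smul_smul, Category.id_comp] <;>
      simp
  have hiso2 : IsIso ((homologyFunctor (ModuleCat.{u} R) (ComplexShape.down ℕ) m).map
      (Φ.map ((u : R) • 𝟙 P.complex))) := inferInstance
  -- conclude
  have heq : (homologyFunctor (ModuleCat.{u} R) (ComplexShape.down ℕ) m).map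
        (Φ.map (r • 𝟙 P.complex)) =
      (homologyFunctor (ModuleCat.{u} R) (ComplexShape.down ℕ) m).map
        (Φ.map ((u : R) • 𝟙 P.complex)) :=
    (F.mapHomotopy ho).homologyMap_eq m
  have h0 : (homologyFunctor (ModuleCat.{u} R) (ComplexShape.down ℕ) m).map
      (Φ.map ((u : R) • 𝟙 P.complex)) = 0 := by
    rw [← heq, hzero, Functor.map_zero]

  have hZ : IsZero ((homologyFunctor (ModuleCat.{u} R) (ComplexShape.down ℕ) m).obj
      (Φ.obj P.complex)) :=
    IsZero.of_mono_eq_zero _ h0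
  exact hZ.of_iso (P.isoLeftDerivedObj F m)

end CharRepAux

/-- If `χ : ℤ × ℤ → ℂˣ` is a nontrivial character, then the group homology of
`ℤ × ℤ` with coefficients in the one-dimensional representation `ℂ_χ` vanishes
in every degree; group homology is expressed as
`Tor_m` over the group ring `ℂ[ℤ × ℤ]` of the trivial module `ℂ` and `ℂ_χ`. -/
theorem groupHomology_of_nontrivial_character_isZero
    (χ : Multiplicative (ℤ × ℤ) →* ℂˣ) (hχ : ∃ g, χ g ≠ 1) (m : ℕ) :
    Limits.IsZero
      (((Tor (ModuleCat (MonoidAlgebra ℂ (Multiplicative (ℤ × ℤ)))) m).obj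
          (ModuleCat.of (MonoidAlgebra ℂ (Multiplicative (ℤ × ℤ)))
            (Representation.trivial ℂ (G := Multiplicative (ℤ × ℤ)) (V := ℂ)).asModule)).obj
        (ModuleCat.of (MonoidAlgebra ℂ (Multiplicative (ℤ × ℤ)))
          (charRep χ).asModule)) := by
  obtain ⟨g, hg⟩ := hχ
  have hc0 : ((χ g : ℂ) - 1) ≠ 0 := sub_ne_zero.mpr fun h => hg (Units.ext h)
  refine CharRepAux.isZero_Tor _ _
    (MonoidAlgebra.single g 1 - 1)
    (algebraMap ℂ (MonoidAlgebra ℂ (Multiplicative (ℤ × ℤ))) ((χ g : ℂ) - 1))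
    ((isUnit_iff_ne_zero.mpr hc0).map
      (algebraMap ℂ (MonoidAlgebra ℂ (Multiplicative (ℤ × ℤ))))) ?_ ?_ m
  · apply ModuleCat.hom_ext
    apply LinearMap.ext
    intro x
    rw [ModuleCat.hom_smul, LinearMap.smul_apply, ModuleCat.hom_zero, LinearMap.zero_apply]
    show (MonoidAlgebra.single g 1 - 1 : MonoidAlgebra ℂ (Multiplicative (ℤ × ℤ))) • x = 0
    apply (Representation.asModuleEquiv
      (Representation.trivial ℂ (G := Multiplicative (ℤ × ℤ)) (V := ℂ))).injective
    rw [map_zero, Representation.asModuleEquiv_map_smul, map_sub, map_one,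
      Representation.asAlgebraHom_single]
    simp
  · apply ModuleCat.hom_ext
    apply LinearMap.ext
    intro y
    rw [ModuleCat.hom_smul, ModuleCat.hom_smul, LinearMap.smul_apply, LinearMap.smul_apply]
    show (MonoidAlgebra.single g 1 - 1 : MonoidAlgebra ℂ (Multiplicative (ℤ × ℤ))) • y =
      algebraMap ℂ (MonoidAlgebra ℂ (Multiplicative (ℤ × ℤ))) ((χ g : ℂ) - 1) • y
    apply (Representation.asModuleEquiv (charRep χ)).injective
    rw [Representation.asModuleEquiv_map_smul, Representation.asModuleEquiv_map_smul,
      map_sub, map_one, Representation.asAlgebraHom_single, AlgHom.commutes]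
    simp [charRep, sub_smul, Algebra.algebraMap_eq_smul_one, MonoidHom.coe_mk, OneHom.coe_mk,
      LinearMap.smul_apply, smul_eq_mul]
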